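/- arXiv:1905.00975 — 4 statements merged into one kernel-verified Lean document; each statement's English description precedes it below -/
import Mathlib

section
/- Let λ/ν be a skew partition of n with max hook length less than 0.8n, and let d be a positive integer. Then n^{d+1}/(26(d+1)) − 2·(0.8)^d·n^d < sum_{j=1}^{n} j^d − sum_{c ∈ λ/ν} h_c^d < n^{d+1}/(d+1) + n^d. -/
open Finset

/-- The cells of the skew shape `μ/ν`. -/
def skewCells (μ ν : YoungDiagram) : Finset (ℕ × ℕ) := μ.cells \ ν.cells

/-- The hook length of a cell `c` in the skew shape `μ/ν`: the number of cells of
`μ/ν` in the row of `c` weakly to its right, plus the number strictly below `c`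
in its column. -/
def hookLen (μ ν : YoungDiagram) (c : ℕ × ℕ) : ℕ :=
  ((skewCells μ ν).filter (fun x => x.1 = c.1 ∧ c.2 ≤ x.2)).card +
    ((skewCells μ ν).filter (fun x => x.2 = c.2 ∧ c.1 < x.1)).card

/-- `T` is a reverse standard Young tableau of the skew shape `μ/ν`: a bijective
filling of the cells by `1, …, n` which strictly decreases along rows (left to right)
and down columns. -/
def IsRSYT (μ ν : YoungDiagram) (T : ℕ × ℕ → ℕ) : Prop :=
  Set.BijOn T (skewCells μ ν : Set (ℕ × ℕ)) (Set.Icc 1 (skewCells μ ν).card) ∧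
    ∀ c ∈ skewCells μ ν, ∀ c' ∈ skewCells μ ν,
      ((c.1 = c'.1 ∧ c.2 < c'.2) ∨ (c.2 = c'.2 ∧ c.1 < c'.1)) → T c' < T c

lemma my_pow_sub_pow {a b : ℝ} (hb : 0 ≤ b) (hab : b ≤ a) (k : ℕ) :
    ((k:ℝ)+1) * b ^ k * (a - b) ≤ a ^ (k+1) - b ^ (k+1) ∧
      a ^ (k+1) - b ^ (k+1) ≤ ((k:ℝ)+1) * a ^ k * (a - b) := by
  have key := geom_sum₂_mul a b (k+1)
  have hterm : ∀ i ∈ Finset.range (k+1),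
      b ^ k ≤ a ^ i * b ^ (k + 1 - 1 - i) ∧ a ^ i * b ^ (k + 1 - 1 - i) ≤ a ^ k := by
    intro i hi
    have hik : i ≤ k := by simpa [Nat.lt_succ_iff] using hi
    have e : k + 1 - 1 - i = k - i := by omega
    rw [e]
    constructor
    · calc b ^ k = b ^ i * b ^ (k - i) := by rw [← pow_add, Nat.add_sub_cancel' hik]
      _ ≤ a ^ i * b ^ (k - i) :=
        mul_le_mul_of_nonneg_right (pow_le_pow_left₀ hb hab i) (pow_nonneg hb _)
    · calc a ^ i * b ^ (k - i) ≤ a ^ i * a ^ (k - i) :=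
        mul_le_mul_of_nonneg_left (pow_le_pow_left₀ hb hab _) (pow_nonneg (hb.trans hab) _)
      _ = a ^ k := by rw [← pow_add, Nat.add_sub_cancel' hik]
  have hlow : ((k:ℝ)+1) * b ^ k ≤ ∑ i ∈ Finset.range (k+1), a ^ i * b ^ (k + 1 - 1 - i) := by
    calc ((k:ℝ)+1) * b ^ k = ∑ _i ∈ Finset.range (k+1), b ^ k := by
          rw [Finset.sum_const, Finset.card_range, nsmul_eq_mul]; push_cast; ring
      _ ≤ _ := Finset.sum_le_sum fun i hi => (hterm i hi).1
  have hhigh : ∑ i ∈ Finset.range (k+1), a ^ i * b ^ (k + 1 - 1 - i) ≤ ((k:ℝ)+1) * a ^ k := by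
    calc ∑ i ∈ Finset.range (k+1), a ^ i * b ^ (k + 1 - 1 - i)
        ≤ ∑ _i ∈ Finset.range (k+1), a ^ k := Finset.sum_le_sum fun i hi => (hterm i hi).2
      _ = ((k:ℝ)+1) * a ^ k := by rw [Finset.sum_const, Finset.card_range, nsmul_eq_mul]; push_cast; ring
  have hab' : (0:ℝ) ≤ a - b := sub_nonneg.2 hab
  constructor
  · calc ((k:ℝ)+1) * b ^ k * (a - b)
        ≤ (∑ i ∈ Finset.range (k+1), a ^ i * b ^ (k + 1 - 1 - i)) * (a - b) :=
          mul_le_mul_of_nonneg_right hlow hab'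
      _ = a ^ (k+1) - b ^ (k+1) := key
  · calc a ^ (k+1) - b ^ (k+1)
        = (∑ i ∈ Finset.range (k+1), a ^ i * b ^ (k + 1 - 1 - i)) * (a - b) := key.symm
      _ ≤ ((k:ℝ)+1) * a ^ k * (a - b) := mul_le_mul_of_nonneg_right hhigh hab'

lemma sum_pow_Icc_le (n d : ℕ) (hd : 1 ≤ d) :
    ∑ j ∈ Icc 1 n, (j:ℝ)^d ≤ (n:ℝ)^(d+1)/((d:ℝ)+1) + (n:ℝ)^d := by
  have h1 : ∀ j : ℕ, ((d:ℝ)+1) * (j:ℝ)^d ≤ ((j:ℝ)+1)^(d+1) - (j:ℝ)^(d+1) := by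
    intro j
    have := (my_pow_sub_pow (a := (j:ℝ)+1) (b := (j:ℝ)) (by positivity) (by linarith) d).1
    simpa using this
  have tele : ∑ i ∈ Finset.range n, (((i:ℝ)+1)^(d+1) - (i:ℝ)^(d+1)) = (n:ℝ)^(d+1) := by
    have := Finset.sum_range_sub (fun i => ((i:ℕ):ℝ)^(d+1)) n
    push_cast at this
    rw [this]
    simp
  have h2 : ∑ j ∈ Finset.range n, (j:ℝ)^d ≤ (n:ℝ)^(d+1)/((d:ℝ)+1) := by
    rw [le_div_iff₀ (by positivity : (0:ℝ) < (d:ℝ)+1)]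
    calc (∑ j ∈ Finset.range n, (j:ℝ)^d) * ((d:ℝ)+1)
        = ∑ j ∈ Finset.range n, ((d:ℝ)+1) * (j:ℝ)^d := by
          rw [Finset.sum_mul]; exact Finset.sum_congr rfl fun x _ => by ring
      _ ≤ ∑ i ∈ Finset.range n, (((i:ℝ)+1)^(d+1) - (i:ℝ)^(d+1)) :=
          Finset.sum_le_sum fun i _ => h1 i
      _ = (n:ℝ)^(d+1) := tele
  have h3 : ∑ j ∈ Icc 1 n, (j:ℝ)^d = ∑ j ∈ Finset.range (n+1), (j:ℝ)^d := by
    refine Finset.sum_subset (fun x hx => ?_) (fun x hx hnx => ?_)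
    · simp only [Finset.mem_Icc] at hx; simp only [Finset.mem_range]; omega
    · simp only [Finset.mem_range] at hx
      simp only [Finset.mem_Icc] at hnx
      have : x = 0 := by omega
      simp [this, zero_pow (by omega : d ≠ 0)]
  rw [h3, Finset.sum_range_succ]
  linarith

lemma sum_pow_Ioc_ge (m n d : ℕ) (hmn : m ≤ n) :
    ((n:ℝ)^(d+1) - (m:ℝ)^(d+1))/((d:ℝ)+1) ≤ ∑ j ∈ Ioc m n, (j:ℝ)^d := by
  have h1 : ∀ i : ℕ, ((m:ℝ)+i+1)^(d+1) - ((m:ℝ)+i)^(d+1) ≤ ((d:ℝ)+1) * ((m:ℝ)+i+1)^d := by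
    intro i
    have := (my_pow_sub_pow (a := ((m+i:ℕ):ℝ)+1) (b := ((m+i:ℕ):ℝ)) (by positivity)
      (by linarith) d).2
    push_cast at this
    linarith
  have tele : ∑ i ∈ Finset.range (n-m), (((m:ℝ)+i+1)^(d+1) - ((m:ℝ)+i)^(d+1))
      = (n:ℝ)^(d+1) - (m:ℝ)^(d+1) := by
    have key := Finset.sum_range_sub (fun i => ((m+i:ℕ):ℝ)^(d+1)) (n-m)
    rw [Nat.add_sub_cancel' hmn] at key
    calc ∑ i ∈ Finset.range (n-m), (((m:ℝ)+i+1)^(d+1) - ((m:ℝ)+i)^(d+1))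
        = ∑ i ∈ Finset.range (n-m), (((m+(i+1):ℕ):ℝ)^(d+1) - ((m+i:ℕ):ℝ)^(d+1)) :=
          Finset.sum_congr rfl fun i _ => by push_cast; ring
      _ = ((n:ℕ):ℝ)^(d+1) - ((m+0:ℕ):ℝ)^(d+1) := key
      _ = (n:ℝ)^(d+1) - (m:ℝ)^(d+1) := by norm_num
  have reindex : ∑ j ∈ Ioc m n, (j:ℝ)^d
      = ∑ i ∈ Finset.range (n-m), ((m:ℝ)+i+1)^d := by
    rw [← Finset.Ico_add_one_add_one_eq_Ioc, Finset.sum_Ico_eq_sum_range]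
    simp only [Nat.add_sub_add_right]
    refine Finset.sum_congr rfl fun i _ => ?_
    push_cast
    ring_nf
  rw [reindex, div_le_iff₀ (by positivity : (0:ℝ) < (d:ℝ)+1)]
  calc (n:ℝ)^(d+1) - (m:ℝ)^(d+1)
      = ∑ i ∈ Finset.range (n-m), (((m:ℝ)+i+1)^(d+1) - ((m:ℝ)+i)^(d+1)) := tele.symm
    _ ≤ ∑ i ∈ Finset.range (n-m), ((d:ℝ)+1) * ((m:ℝ)+i+1)^d :=
        Finset.sum_le_sum fun i _ => h1 i
    _ = (∑ i ∈ Finset.range (n-m), ((m:ℝ)+i+1)^d) * ((d:ℝ)+1) := by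
        rw [Finset.sum_mul]; exact Finset.sum_congr rfl fun x _ => by ring

lemma geo_le (d : ℕ) (hd : 1 ≤ d) : (0.8:ℝ)^d * (5 + d) ≤ 4.8 := by
  induction d, hd using Nat.le_induction with
  | base => norm_num
  | succ d hd ih =>
    have hp : (0:ℝ) ≤ 0.8^d := by positivity
    push_cast at ih ⊢
    calc (0.8:ℝ)^(d+1) * (5 + ((d:ℝ)+1)) = 0.8^d * (0.8 * (6 + d)) := by ring
      _ ≤ 0.8^d * (5 + d) := by nlinarith
      _ ≤ 4.8 := ih

def Tval (μ ν : YoungDiagram) (c : ℕ × ℕ) : ℕ :=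
  ((skewCells μ ν).filter (fun x => c.1 < x.1 ∨ (c.1 = x.1 ∧ c.2 ≤ x.2))).card

lemma hook_le_Tval (μ ν : YoungDiagram) (c : ℕ × ℕ) :
    hookLen μ ν c ≤ Tval μ ν c := by
  classical
  have hsub1 : (skewCells μ ν).filter (fun x => x.1 = c.1 ∧ c.2 ≤ x.2) ⊆
      (skewCells μ ν).filter (fun x => c.1 < x.1 ∨ (c.1 = x.1 ∧ c.2 ≤ x.2)) := by
    intro x hx
    simp only [Finset.mem_filter] at hx ⊢
    exact ⟨hx.1, Or.inr ⟨hx.2.1.symm, hx.2.2⟩⟩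
  have hsub2 : (skewCells μ ν).filter (fun x => x.2 = c.2 ∧ c.1 < x.1) ⊆
      (skewCells μ ν).filter (fun x => c.1 < x.1 ∨ (c.1 = x.1 ∧ c.2 ≤ x.2)) := by
    intro x hx
    simp only [Finset.mem_filter] at hx ⊢
    exact ⟨hx.1, Or.inl hx.2.2⟩
  have hdisj : Disjoint ((skewCells μ ν).filter (fun x => x.1 = c.1 ∧ c.2 ≤ x.2))
      ((skewCells μ ν).filter (fun x => x.2 = c.2 ∧ c.1 < x.1)) := by
    rw [Finset.disjoint_left]
    intro x h1 h2
    simp only [Finset.mem_filter] at h1 h2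
    omega
  calc hookLen μ ν c
      = (((skewCells μ ν).filter (fun x => x.1 = c.1 ∧ c.2 ≤ x.2)) ∪
        ((skewCells μ ν).filter (fun x => x.2 = c.2 ∧ c.1 < x.1))).card :=
        (Finset.card_union_of_disjoint hdisj).symm
    _ ≤ _ := Finset.card_le_card (Finset.union_subset hsub1 hsub2)

lemma Tval_lt (μ ν : YoungDiagram) (c c' : ℕ × ℕ) (hc : c ∈ skewCells μ ν)
    (hlt : c.1 < c'.1 ∨ (c.1 = c'.1 ∧ c.2 < c'.2)) : Tval μ ν c' < Tval μ ν c := by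
  classical
  apply Finset.card_lt_card
  have hsub : (skewCells μ ν).filter (fun x => c'.1 < x.1 ∨ (c'.1 = x.1 ∧ c'.2 ≤ x.2)) ⊆
      (skewCells μ ν).filter (fun x => c.1 < x.1 ∨ (c.1 = x.1 ∧ c.2 ≤ x.2)) := by
    intro x hx
    rw [Finset.mem_filter] at hx ⊢
    exact ⟨hx.1, by omega⟩
  have hmem : c ∈ (skewCells μ ν).filter (fun x => c.1 < x.1 ∨ (c.1 = x.1 ∧ c.2 ≤ x.2)) :=
    Finset.mem_filter.mpr ⟨hc, Or.inr ⟨rfl, le_rfl⟩⟩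
  have hnot : c ∉ (skewCells μ ν).filter (fun x => c'.1 < x.1 ∨ (c'.1 = x.1 ∧ c'.2 ≤ x.2)) := by
    rw [Finset.mem_filter]
    push_neg
    intro _
    omega
  exact (Finset.ssubset_iff_of_subset hsub).2 ⟨c, hmem, hnot⟩

lemma Tval_injOn (μ ν : YoungDiagram) : ∀ a ∈ skewCells μ ν, ∀ b ∈ skewCells μ ν,
    Tval μ ν a = Tval μ ν b → a = b := by
  intro a ha b hb heq
  by_contra hne
  have hor : (a.1 < b.1 ∨ (a.1 = b.1 ∧ a.2 < b.2)) ∨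
      (b.1 < a.1 ∨ (b.1 = a.1 ∧ b.2 < a.2)) := by
    have : ¬ (a.1 = b.1 ∧ a.2 = b.2) := fun h => hne (Prod.ext h.1 h.2)
    omega
  rcases hor with h | h
  · exact absurd heq (by have := Tval_lt μ ν a b ha h; omega)
  · exact absurd heq (by have := Tval_lt μ ν b a hb h; omega)

lemma one_le_hookLen (μ ν : YoungDiagram) (c : ℕ × ℕ) (hc : c ∈ skewCells μ ν) :
    1 ≤ hookLen μ ν c := by
  classical
  have : c ∈ (skewCells μ ν).filter (fun x => x.1 = c.1 ∧ c.2 ≤ x.2) :=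
    Finset.mem_filter.mpr ⟨hc, rfl, le_refl _⟩
  have h1 := Finset.card_pos.mpr ⟨c, this⟩
  unfold hookLen
  omega

lemma Tval_mem (μ ν : YoungDiagram) (c : ℕ × ℕ) (hc : c ∈ skewCells μ ν) :
    Tval μ ν c ∈ Finset.Icc 1 (skewCells μ ν).card := by
  classical
  simp only [Finset.mem_Icc]
  constructor
  · apply Finset.card_pos.mpr
    exact ⟨c, Finset.mem_filter.mpr ⟨hc, Or.inr ⟨rfl, le_rfl⟩⟩⟩
  · exact Finset.card_le_card (Finset.filter_subset _ _)

lemma Tval_image (μ ν : YoungDiagram) :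
    (skewCells μ ν).image (Tval μ ν) = Finset.Icc 1 (skewCells μ ν).card := by
  classical
  apply Finset.eq_of_subset_of_card_le
  · intro j hj
    rcases Finset.mem_image.1 hj with ⟨c, hc, rfl⟩
    exact Tval_mem μ ν c hc
  · rw [Finset.card_image_of_injOn (Tval_injOn μ ν), Nat.card_Icc]
    omega

set_option maxHeartbeats 1000000 in
/-- If every hook length of the skew shape `μ/ν` of size `n` is less than `0.8 n`,
then for every positive integer `d`,
`n^{d+1}/(26(d+1)) - 2(0.8)^d n^d < ∑_{j=1}^n j^d - ∑_c h_c^d < n^{d+1}/(d+1) + n^d`. -/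
theorem power_sum_hook_difference_bounds (μ ν : YoungDiagram) (hνμ : ν ≤ μ)
    (n : ℕ) (hn : n = (skewCells μ ν).card) (hn1 : 1 ≤ n)
    (hmax : ∀ c ∈ skewCells μ ν, (hookLen μ ν c : ℝ) < 0.8 * n) (d : ℕ) (hd : 1 ≤ d) :
    (n : ℝ) ^ (d + 1) / (26 * (d + 1)) - 2 * (0.8 : ℝ) ^ d * (n : ℝ) ^ d <
        (∑ j ∈ Finset.Icc 1 n, (j : ℝ) ^ d) - ∑ c ∈ skewCells μ ν, (hookLen μ ν c : ℝ) ^ d ∧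
      (∑ j ∈ Finset.Icc 1 n, (j : ℝ) ^ d) - ∑ c ∈ skewCells μ ν, (hookLen μ ν c : ℝ) ^ d <
        (n : ℝ) ^ (d + 1) / (d + 1) + (n : ℝ) ^ d := by
  classical
  set S : ℝ := ∑ j ∈ Finset.Icc 1 n, (j : ℝ) ^ d with hS
  set H : ℝ := ∑ c ∈ skewCells μ ν, (hookLen μ ν c : ℝ) ^ d with hH
  have hNpos : (1:ℝ) ≤ (n:ℝ) := by exact_mod_cast hn1
  -- upper bound
  have hupper : S - H < (n : ℝ) ^ (d + 1) / (d + 1) + (n : ℝ) ^ d := by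
    have h1 : S ≤ (n:ℝ)^(d+1)/((d:ℝ)+1) + (n:ℝ)^d := sum_pow_Icc_le n d hd
    have h2 : (n:ℝ) ≤ H := by
      have := Finset.card_nsmul_le_sum (skewCells μ ν)
        (fun c => (hookLen μ ν c : ℝ) ^ d) 1 (fun c hc => by
          have h1 := one_le_hookLen μ ν c hc
          have : (1:ℝ) ≤ (hookLen μ ν c : ℝ) := by exact_mod_cast h1
          calc (1:ℝ) = 1^d := (one_pow d).symm
          _ ≤ (hookLen μ ν c : ℝ)^d := pow_le_pow_left₀ one_pos.le this d)
      rw [nsmul_eq_mul, mul_one, ← hn] at this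
      exact this
    have : ((d:ℝ)+1) = ((d+1 : ℕ):ℝ) := by push_cast; ring
    rw [this] at h1
    push_cast at h1 ⊢
    linarith
  -- lower bound
  set m : ℕ := 4 * n / 5 with hm
  have hm_le : m ≤ n := by omega
  have hm5 : 5 * m ≤ 4 * n := by omega
  have hm5' : 4 * n < 5 * (m + 1) := by omega
  have hmr : (m:ℝ) ≤ 0.8 * n := by
    have : (5:ℝ) * m ≤ 4 * n := by exact_mod_cast hm5
    linarith
  have hmr2 : 0.8 * (n:ℝ) < (m:ℝ) + 1 := by
    have : (4:ℝ) * n < 5 * (m + 1) := by exact_mod_cast hm5'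
    linarith
  set P : ℝ := (0.8 * (n:ℝ))^d with hP
  have hPnn : 0 ≤ P := by positivity
  -- hook sum is at most sum of min over Icc 1 n
  have hHM : H ≤ ∑ j ∈ Finset.Icc 1 n, min P ((j:ℝ)^d) := by
    have step1 : H ≤ ∑ c ∈ skewCells μ ν, min P ((Tval μ ν c : ℝ)^d) := by
      apply Finset.sum_le_sum
      intro c hc
      refine le_min ?_ ?_
      · exact pow_le_pow_left₀ (Nat.cast_nonneg _) (le_of_lt (hmax c hc)) d
      · refine pow_le_pow_left₀ (Nat.cast_nonneg _) ?_ d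
        exact_mod_cast hook_le_Tval μ ν c
    have step2 : ∑ c ∈ skewCells μ ν, min P ((Tval μ ν c : ℝ)^d)
        = ∑ j ∈ Finset.Icc 1 n, min P ((j:ℝ)^d) := by
      rw [hn, ← Tval_image μ ν, Finset.sum_image (Tval_injOn μ ν)]
    linarith [step1, step2.le, step2.ge]
  -- split the difference sum
  have hIoc : Finset.Icc 1 n = Finset.Ioc 0 n := Finset.Icc_add_one_left_eq_Ioc 0 n
  have hsplit : ∑ j ∈ Finset.Ioc 0 m, ((j:ℝ)^d - min P ((j:ℝ)^d))
      + ∑ j ∈ Finset.Ioc m n, ((j:ℝ)^d - min P ((j:ℝ)^d))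
      = ∑ j ∈ Finset.Icc 1 n, ((j:ℝ)^d - min P ((j:ℝ)^d)) := by
    rw [hIoc]
    exact Finset.sum_Ioc_consecutive _ (Nat.zero_le m) hm_le
  have hpart1 : 0 ≤ ∑ j ∈ Finset.Ioc 0 m, ((j:ℝ)^d - min P ((j:ℝ)^d)) :=
    Finset.sum_nonneg fun j _ => by
      have := min_le_right P ((j:ℝ)^d); linarith
  have hpart2 : ∑ j ∈ Finset.Ioc m n, ((j:ℝ)^d - P)
      ≤ ∑ j ∈ Finset.Ioc m n, ((j:ℝ)^d - min P ((j:ℝ)^d)) :=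
    Finset.sum_le_sum fun j _ => by
      have := min_le_left P ((j:ℝ)^d); linarith
  have hconst : ∑ j ∈ Finset.Ioc m n, ((j:ℝ)^d - P)
      = (∑ j ∈ Finset.Ioc m n, (j:ℝ)^d) - ((n:ℝ) - (m:ℝ)) * P := by
    rw [Finset.sum_sub_distrib, Finset.sum_const, Nat.card_Ioc, nsmul_eq_mul,
      Nat.cast_sub hm_le]
  have hmain : (∑ j ∈ Finset.Ioc m n, (j:ℝ)^d)
      ≥ ((n:ℝ)^(d+1) - (0.8*(n:ℝ))^(d+1))/((d:ℝ)+1) := by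
    have h1 := sum_pow_Ioc_ge m n d hm_le
    have h2 : (m:ℝ)^(d+1) ≤ (0.8*(n:ℝ))^(d+1) :=
      pow_le_pow_left₀ (Nat.cast_nonneg _) hmr (d+1)
    have h3 : ((n:ℝ)^(d+1) - (0.8*(n:ℝ))^(d+1))/((d:ℝ)+1)
        ≤ ((n:ℝ)^(d+1) - (m:ℝ)^(d+1))/((d:ℝ)+1) := by
      gcongr
    linarith
  have hdist : ∑ j ∈ Finset.Icc 1 n, ((j:ℝ)^d - min P ((j:ℝ)^d))
      = S - ∑ j ∈ Finset.Icc 1 n, min P ((j:ℝ)^d) := Finset.sum_sub_distrib _ _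
  have hnm : ((n:ℝ) - (m:ℝ)) * P ≤ (0.2*(n:ℝ)+1) * P :=
    mul_le_mul_of_nonneg_right (by linarith) hPnn
  have hlow : ((n:ℝ)^(d+1) - (0.8*(n:ℝ))^(d+1))/((d:ℝ)+1) - (0.2*(n:ℝ)+1)*P ≤ S - H := by
    linarith
  -- final algebra
  have hD1pos : (0:ℝ) < (d:ℝ)+1 := by positivity
  have hp : (0:ℝ) < (0.8:ℝ)^d := by positivity
  have hq1 : (1:ℝ) ≤ (n:ℝ)^d := by
    calc (1:ℝ) = 1^d := (one_pow d).symm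
    _ ≤ (n:ℝ)^d := pow_le_pow_left₀ one_pos.le hNpos d
  have hD1 : (2:ℝ) ≤ (d:ℝ)+1 := by
    have : (1:ℝ) ≤ (d:ℝ) := by exact_mod_cast hd
    linarith
  have hK : (0.8:ℝ)^d * (4 + ((d:ℝ)+1)) ≤ 4.8 := by
    have := geo_le d hd
    push_cast at this ⊢
    linarith
  have ePsplit : P = (0.8:ℝ)^d * (n:ℝ)^d := mul_pow 0.8 (n:ℝ) d
  have eN1 : (n:ℝ)^(d+1) = (n:ℝ)^d * (n:ℝ) := pow_succ (n:ℝ) d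
  have eP1 : (0.8*(n:ℝ))^(d+1) = ((0.8:ℝ)^d * 0.8) * ((n:ℝ)^d * (n:ℝ)) := by
    rw [mul_pow, pow_succ, pow_succ]
  set Y : ℝ := 26*((n:ℝ)^(d+1) - (0.8*(n:ℝ))^(d+1)) - 26*((d:ℝ)+1)*((0.2*(n:ℝ)+1)*P)
      - ((n:ℝ)^(d+1) - 52*((d:ℝ)+1)*((0.8:ℝ)^d*(n:ℝ)^d)) with hY
  have hNq1 : (1:ℝ) ≤ (n:ℝ)^d * (n:ℝ) := by nlinarith [hq1, hNpos]
  have Ypos : 0 < Y := by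
    rw [hY, ePsplit, eP1, eN1]
    nlinarith [mul_le_mul_of_nonneg_right hK (show (0:ℝ) ≤ (n:ℝ)^d * (n:ℝ) by positivity),
      mul_pos (mul_pos hD1pos hp) (lt_of_lt_of_le one_pos hq1), hNq1, hp.le, hq1, hNpos, hD1]
  have hXeq : (((n:ℝ)^(d+1) - (0.8*(n:ℝ))^(d+1))/((d:ℝ)+1) - (0.2*(n:ℝ)+1)*P)
      - ((n:ℝ)^(d+1)/(26*((d:ℝ)+1)) - 2*(0.8:ℝ)^d*(n:ℝ)^d) = Y/(26*((d:ℝ)+1)) := by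
    rw [hY]
    field_simp
    ring
  have hstrict : (n:ℝ)^(d+1)/(26*((d:ℝ)+1)) - 2*(0.8:ℝ)^d*(n:ℝ)^d
      < ((n:ℝ)^(d+1) - (0.8*(n:ℝ))^(d+1))/((d:ℝ)+1) - (0.2*(n:ℝ)+1)*P := by
    have hdiv : 0 < Y/(26*((d:ℝ)+1)) := div_pos Ypos (by positivity)
    linarith [hXeq.ge, hXeq.le]
  constructor
  · push_cast
    linarith
  · exact hupper
end

section
/- For every positive integer d, (1/(d+1))·(1 − (0.8)^{d+1}) − 0.2·(0.8)^d ≥ 1/(26(d+1)). -/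
lemma aux_pow_bound : ∀ d : ℕ, 1 ≤ d → (0.8 : ℝ) ^ d * (1 + 0.2 * d) ≤ 24 / 25 := by
  intro d hd
  induction d with
  | zero => omega
  | succ n ih =>
    rcases Nat.eq_or_lt_of_le hd with h | h
    · norm_num [← h]
    · have hn : 1 ≤ n := by omega
      have := ih hn
      have hp : (0:ℝ) < (0.8:ℝ) ^ n := by positivity
      have hn0 : (0:ℝ) ≤ (n:ℝ) := Nat.cast_nonneg n
      have : (0.8 : ℝ) ^ (n+1) * (1 + 0.2 * ((n:ℝ)+1)) ≤ (0.8 : ℝ) ^ n * (1 + 0.2 * n) := by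
        rw [pow_succ]
        nlinarith
      push_cast
      linarith [ih hn]

/-- For every positive integer `d`,
`(1/(d+1))(1 - (0.8)^{d+1}) - 0.2 (0.8)^d ≥ 1/(26(d+1))`. -/
theorem elementary_coefficient_bound (d : ℕ) (hd : 1 ≤ d) :
    (1 / ((d : ℝ) + 1)) * (1 - (0.8 : ℝ) ^ (d + 1)) - (0.2 : ℝ) * (0.8 : ℝ) ^ d ≥
      1 / (26 * ((d : ℝ) + 1)) := by
  have key := aux_pow_bound d hd
  have hx : (0:ℝ) < (d:ℝ) + 1 := by positivity
  have heq : (1 / ((d : ℝ) + 1)) * (1 - (0.8 : ℝ) ^ (d + 1)) - (0.2 : ℝ) * (0.8 : ℝ) ^ d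
      - 1 / (26 * ((d : ℝ) + 1))
      = (25/26 - (0.8 : ℝ) ^ d * (1 + 0.2 * d)) / ((d : ℝ) + 1) := by
    rw [pow_succ]
    field_simp
    ring
  have hnum : (0:ℝ) ≤ 25/26 - (0.8 : ℝ) ^ d * (1 + 0.2 * d) := by
    have : (24:ℝ)/25 ≤ 25/26 := by norm_num
    linarith
  have := div_nonneg hnum hx.le
  linarith [heq ▸ this]
end

section
/- Let U_n be the discrete uniform random variable on {0, 1, ..., n−1}. Then for every d ≥ 1, the d-th cumulant of U_n equals (B_d/d)(n^d − 1), where B_d is the d-th Bernoulli number with B_1 = 1/2. -/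
open MeasureTheory ProbabilityTheory

section Aux

open Filter Real Finset
open scoped ContDiff

/-! ### The entire function `m` with `t * m t = exp t - 1`, `m 0 = 1`. -/

noncomputable def mcoef : ℕ → ℝ := fun k => (((k+1).factorial : ℝ))⁻¹

noncomputable def mfun : ℝ → ℝ := FormalMultilinearSeries.ofScalarsSum mcoef

lemma mfun_eq (t : ℝ) : mfun t = ∑' k : ℕ, ((k+1).factorial : ℝ)⁻¹ * t ^ k := by
  rw [mfun, FormalMultilinearSeries.ofScalars_sum_eq]
  exact tsum_congr fun k => by simp [mcoef, smul_eq_mul]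

lemma mradius : (FormalMultilinearSeries.ofScalars ℝ mcoef).radius = ⊤ := by
  apply FormalMultilinearSeries.ofScalars_radius_eq_top_of_tendsto
  · exact Eventually.of_forall fun n => by simp [mcoef]; positivity
  · have h : ∀ n : ℕ, ‖mcoef (n+1)‖ / ‖mcoef n‖ = ((n:ℝ)+2)⁻¹ := by
      intro n
      have h1 : ((n+1).factorial : ℝ) ≠ 0 := by positivity
      have h2 : ((n+2).factorial : ℝ) ≠ 0 := by positivity
      rw [mcoef, mcoef]
      rw [norm_inv, norm_inv, Real.norm_natCast, Real.norm_natCast]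
      rw [div_eq_mul_inv, inv_inv]
      have : (n+1+1).factorial = (n+2) * (n+1).factorial := by
        rw [show n+1+1 = n+2 from rfl, Nat.factorial_succ]
      rw [this]
      push_cast
      field_simp
    simp only [Nat.succ_eq_add_one, h]
    have : Tendsto (fun n : ℕ => ((n:ℝ)+2)) atTop atTop := by
      apply Filter.tendsto_atTop_add_const_right
      exact tendsto_natCast_atTop_atTop
    exact this.inv_tendsto_atTop

lemma mfun_hasFPowerSeries : HasFPowerSeriesOnBall mfun
    (FormalMultilinearSeries.ofScalars ℝ mcoef) 0 ⊤ := by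
  have := (FormalMultilinearSeries.ofScalars ℝ mcoef).hasFPowerSeriesOnBall
    (by rw [mradius]; exact ENNReal.zero_lt_top)
  rwa [mradius] at this

lemma mfun_contDiff : ContDiff ℝ ∞ mfun := by
  rw [contDiff_iff_contDiffAt]
  intro x
  have hx : x ∈ Metric.eball (0:ℝ) ⊤ := by simp
  exact (mfun_hasFPowerSeries.analyticAt_of_mem hx).contDiffAt

lemma mul_mfun (t : ℝ) : t * mfun t = Real.exp t - 1 := by
  rw [mfun_eq]
  rw [← tsum_mul_left]
  have hsum : Summable fun k : ℕ => t ^ k / (k.factorial : ℝ) :=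
    Real.summable_pow_div_factorial t
  have hexp : Real.exp t = ∑' k : ℕ, t ^ k / (k.factorial : ℝ) := by
    rw [Real.exp_eq_exp_ℝ, NormedSpace.exp_eq_tsum_div]
  rw [hexp, Summable.tsum_eq_zero_add hsum]
  simp only [pow_zero, Nat.factorial_zero, Nat.cast_one, div_one]
  rw [add_sub_cancel_left]
  exact tsum_congr fun k => by rw [div_eq_mul_inv, pow_succ]; ring

lemma mfun_zero : mfun 0 = 1 := by
  rw [mfun_eq]
  rw [tsum_eq_single 0 (fun k hk => by simp [zero_pow hk])]
  simp

lemma mfun_of_ne (t : ℝ) (ht : t ≠ 0) : mfun t = (Real.exp t - 1) / t := by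
  rw [eq_div_iff ht, ← mul_mfun t]; ring

lemma mfun_pos (t : ℝ) : 0 < mfun t := by
  rcases lt_trichotomy t 0 with h | rfl | h
  · rw [mfun_of_ne t h.ne]
    apply div_pos_of_neg_of_neg _ h
    simpa using Real.exp_lt_one_iff.2 h
  · rw [mfun_zero]; norm_num
  · rw [mfun_of_ne t h.ne']
    apply div_pos _ h
    simpa using Real.one_lt_exp_iff.mpr h

lemma geom_key (n : ℕ) (hn : 1 ≤ n) (t : ℝ) :
    (∑ k ∈ Finset.range n, Real.exp (t * k)) * mfun t = n * mfun (n * t) := by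
  rcases eq_or_ne t 0 with rfl | ht
  · simp [mfun_zero]
  · have hE1 : Real.exp t ≠ 1 := by
      intro h; exact ht (by simpa using Real.exp_injective (h.trans Real.exp_zero.symm))
    have hn0 : (n : ℝ) ≠ 0 := Nat.cast_ne_zero.2 (by omega)
    have hnt : (n : ℝ) * t ≠ 0 := mul_ne_zero hn0 ht
    have hgeom : ∑ k ∈ Finset.range n, Real.exp (t * k) =
        ((Real.exp t) ^ n - 1) / (Real.exp t - 1) := by
      rw [← geom_sum_eq hE1]
      exact Finset.sum_congr rfl fun k _ => by
        rw [← Real.exp_nat_mul]; ring_nf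
    rw [hgeom, mfun_of_ne t ht, mfun_of_ne _ hnt, ← Real.exp_nat_mul]
    have hE1' : Real.exp t - 1 ≠ 0 := sub_ne_zero.2 hE1
    field_simp

/-! ### `g = log ∘ m` and its key differential identity. -/

noncomputable def gfun : ℝ → ℝ := fun t => Real.log (mfun t)

lemma gfun_contDiff : ContDiff ℝ ∞ gfun := by
  rw [contDiff_iff_contDiffAt]
  intro x
  exact (Real.contDiffAt_log.2 (mfun_pos x).ne').comp x mfun_contDiff.contDiffAt

lemma key_identity (t : ℝ) :
    (t * deriv gfun t + 1 - t) * Real.exp t = t * deriv gfun t + 1 := by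
  rcases eq_or_ne t 0 with rfl | ht
  · simp
  · have hE1 : Real.exp t - 1 ≠ 0 := by
      intro h
      exact ht (by simpa using Real.exp_injective ((sub_eq_zero.1 h).trans Real.exp_zero.symm))
    have hm : HasDerivAt mfun ((Real.exp t * t - (Real.exp t - 1) * 1) / t ^ 2) t := by
      have h1 : HasDerivAt (fun s : ℝ => Real.exp s - 1) (Real.exp t) t :=
        (Real.hasDerivAt_exp t).sub_const 1
      have h2 : HasDerivAt (fun s : ℝ => s) (1:ℝ) t := hasDerivAt_id t
      have hd := h1.div h2 ht
      apply hd.congr_of_eventuallyEq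
      have hopen : IsOpen {s : ℝ | s ≠ 0} := isOpen_compl_singleton
      filter_upwards [hopen.mem_nhds ht] with s hs
      exact mfun_of_ne s hs
    have hg : HasDerivAt gfun
        (((Real.exp t * t - (Real.exp t - 1) * 1) / t ^ 2) / mfun t) t :=
      hm.log (mfun_pos t).ne'
    rw [hg.deriv, mfun_of_ne t ht]
    field_simp
    ring

/-! ### Generic iterated-derivative lemmas. -/

lemma diffD {h : ℝ → ℝ} (hh : ContDiff ℝ ∞ h) (k : ℕ) :
    Differentiable ℝ (iteratedDeriv k h) := by
  apply hh.differentiable_iteratedDeriv k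
  exact_mod_cast WithTop.coe_lt_top _

lemma smoothD {h : ℝ → ℝ} (hh : ContDiff ℝ ∞ h) : ContDiff ℝ ∞ (deriv h) :=
  (contDiff_infty_iff_deriv.mp hh).2

lemma iterD_sub {f g : ℝ → ℝ} (hf : ContDiff ℝ ∞ f) (hg : ContDiff ℝ ∞ g) (k : ℕ) (x : ℝ) :
    iteratedDeriv k (fun t => f t - g t) x = iteratedDeriv k f x - iteratedDeriv k g x := by
  have := iteratedDerivWithin_sub (Set.mem_univ x) uniqueDiffOn_univ (n := k) (f := f) (g := g)
    (hf.of_le (by exact_mod_cast le_top)).contDiffWithinAt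
    (hg.of_le (by exact_mod_cast le_top)).contDiffWithinAt
  simp only [iteratedDerivWithin_univ] at this
  exact this

lemma iterD_add {f g : ℝ → ℝ} (hf : ContDiff ℝ ∞ f) (hg : ContDiff ℝ ∞ g) (k : ℕ) (x : ℝ) :
    iteratedDeriv k (fun t => f t + g t) x = iteratedDeriv k f x + iteratedDeriv k g x := by
  have := iteratedDerivWithin_add (Set.mem_univ x) uniqueDiffOn_univ (n := k) (f := f) (g := g)
    (hf.of_le (by exact_mod_cast le_top)).contDiffWithinAt
    (hg.of_le (by exact_mod_cast le_top)).contDiffWithinAt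
  simp only [iteratedDerivWithin_univ] at this
  exact this

lemma L1 {h : ℝ → ℝ} (hh : ContDiff ℝ ∞ h) (k : ℕ) (x : ℝ) :
    iteratedDeriv (k+1) (fun t => t * h t) x
      = x * iteratedDeriv (k+1) h x + (k+1 : ℝ) * iteratedDeriv k h x := by
  induction k generalizing x with
  | zero =>
    rw [iteratedDeriv_one]
    rw [deriv_fun_mul differentiableAt_fun_id (hh.differentiable (by norm_num) x)]
    simp [iteratedDeriv_one, iteratedDeriv_zero]
    ring
  | succ k ih =>
    rw [iteratedDeriv_succ, funext (fun y => ih y)]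
    rw [deriv_fun_add (differentiableAt_fun_id.fun_mul ((diffD hh (k+1)) x))
      ((differentiableAt_const _).fun_mul ((diffD hh k) x))]
    rw [deriv_fun_mul differentiableAt_fun_id ((diffD hh (k+1)) x),
      deriv_const_mul _ ((diffD hh k) x)]
    rw [← iteratedDeriv_succ, ← iteratedDeriv_succ]
    push_cast
    simp only [deriv_id'']
    ring

lemma pascal_sum (N : ℕ) (A : ℕ → ℝ) :
    ∑ k ∈ range (N+1), (N.choose k : ℝ) * A (k+1)
      + ∑ k ∈ range (N+1), (N.choose k : ℝ) * A k
      = ∑ k ∈ range (N+2), ((N+1).choose k : ℝ) * A k := by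
  rw [Finset.sum_range_succ' (fun k => (((N+1).choose k) : ℝ) * A k) (N+1)]
  have e1 : ∀ k ∈ range (N+1), (((N+1).choose (k+1)) : ℝ) * A (k+1)
      = (N.choose k : ℝ) * A (k+1) + (N.choose (k+1) : ℝ) * A (k+1) := by
    intro k _
    rw [Nat.choose_succ_succ]
    push_cast
    ring
  rw [Finset.sum_congr rfl e1, Finset.sum_add_distrib]
  have e2 : ∑ k ∈ range (N+1), ((N.choose (k+1)) : ℝ) * A (k+1)
      + ((N+1).choose 0 : ℝ) * A 0
      = ∑ k ∈ range (N+1), ((N.choose k) : ℝ) * A k := by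
    have := Finset.sum_range_succ' (fun k => ((N.choose k) : ℝ) * A k) (N+1)
    rw [Finset.sum_range_succ (fun k => ((N.choose k) : ℝ) * A k) (N+1)] at this
    simp only [Nat.choose_succ_self, Nat.cast_zero, zero_mul, add_zero] at this
    simp only [Nat.choose_zero_right, Nat.cast_one] at this ⊢
    linarith [this]
  linarith [e2]

lemma L2 {φ : ℝ → ℝ} (hφ : ContDiff ℝ ∞ φ) (N : ℕ) (x : ℝ) :
    iteratedDeriv N (fun t => φ t * Real.exp t) x
      = (∑ k ∈ range (N+1), (N.choose k : ℝ) * iteratedDeriv k φ x) * Real.exp x := by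
  induction N generalizing x with
  | zero => simp
  | succ N ih =>
    rw [iteratedDeriv_succ, funext (fun y => ih y)]
    have hdS : ∀ y : ℝ, DifferentiableAt ℝ
        (fun z => ∑ k ∈ range (N+1), (N.choose k : ℝ) * iteratedDeriv k φ z) y := by
      intro y
      exact DifferentiableAt.fun_sum fun k _ => (differentiableAt_const _).mul ((diffD hφ k) y)
    rw [deriv_fun_mul (hdS x) (Real.differentiable_exp x)]
    rw [deriv_fun_sum (fun k _ => (differentiableAt_const _).fun_mul ((diffD hφ k) x))]
    simp only [deriv_const_mul _ ((diffD hφ _) x), ← iteratedDeriv_succ, Real.deriv_exp]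
    rw [← add_mul]
    congr 1
    exact (pascal_sum N (fun k => iteratedDeriv k φ x)).symm ▸ rfl

lemma iterderiv_const (j : ℕ) (c x : ℝ) :
    iteratedDeriv (j+1) (fun _ : ℝ => c) x = 0 := by
  induction j generalizing c x with
  | zero => simp [iteratedDeriv_one]
  | succ j ih =>
    rw [iteratedDeriv_succ']
    have : (deriv fun _ : ℝ => c) = fun _ : ℝ => (0:ℝ) := funext fun y => deriv_const y c
    rw [this]
    exact ih 0 x

lemma iterderiv_id (k : ℕ) : iteratedDeriv k (fun t : ℝ => t) 0 = if k = 1 then 1 else 0 := by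
  match k with
  | 0 => simp
  | 1 => simp [iteratedDeriv_one]
  | (j+2) =>
    rw [iteratedDeriv_succ']
    have : (deriv fun t : ℝ => t) = fun _ : ℝ => (1:ℝ) := funext fun y => deriv_id y
    rw [this]
    simp only [show j+2 ≠ 1 by omega, if_false]
    exact iterderiv_const j 1 0

/-! ### The Bernoulli recurrence for the Taylor coefficients of `g`. -/

noncomputable def aseq (k : ℕ) : ℝ := iteratedDeriv k (fun t => t * deriv gfun t + 1) 0

lemma hsmooth : ContDiff ℝ ∞ (fun t : ℝ => t * deriv gfun t + 1) :=
  (contDiff_id.mul (smoothD gfun_contDiff)).add contDiff_const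

lemma aseq_zero : aseq 0 = 1 := by
  simp [aseq, iteratedDeriv_zero]

lemma aseq_succ (k : ℕ) : aseq (k+1) = (k+1 : ℝ) * iteratedDeriv (k+1) gfun 0 := by
  rw [aseq]
  rw [iterD_add (f := fun t => t * deriv gfun t) (g := fun _ => (1:ℝ))
    (contDiff_id.mul (smoothD gfun_contDiff)) contDiff_const (k+1) 0]
  rw [iterderiv_const k 1 0, add_zero, L1 (smoothD gfun_contDiff) k 0]
  simp only [zero_mul, zero_add]
  rw [← iteratedDeriv_succ']

lemma aseq_recurrence (N : ℕ) (hN : 1 ≤ N) :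
    ∑ k ∈ range N, (N.choose k : ℝ) * aseq k = N := by
  set φ : ℝ → ℝ := fun t => t * deriv gfun t + 1 - t with hφdef
  have hφ : ContDiff ℝ ∞ φ := hsmooth.sub contDiff_id
  have hFφ : (fun t : ℝ => t * deriv gfun t + 1) = fun t => φ t * Real.exp t := by
    funext t; rw [hφdef]; exact (key_identity t).symm
  have hstep1 : aseq N = ∑ k ∈ range (N+1), (N.choose k : ℝ) * iteratedDeriv k φ 0 := by
    rw [aseq, hFφ, L2 hφ N 0, Real.exp_zero, mul_one]
  have hstep2 : ∀ k, iteratedDeriv k φ 0 = aseq k - (if k = 1 then 1 else 0) := by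
    intro k
    have := iterD_sub (f := fun t => t * deriv gfun t + 1) (g := fun t => t) hsmooth contDiff_id k 0
    rw [this, iterderiv_id k, aseq]
  have hdelta : ∑ k ∈ range (N+1), (N.choose k : ℝ) * (if k = 1 then (1:ℝ) else 0) = N := by
    have : ∀ k, (N.choose k : ℝ) * (if k = 1 then (1:ℝ) else 0)
        = if k = 1 then (N.choose k : ℝ) else 0 := by
      intro k; split <;> simp
    rw [Finset.sum_congr rfl fun k _ => this k]
    rw [Finset.sum_ite_eq' (range (N+1)) 1 (fun k => (N.choose k : ℝ))]
    simp [Finset.mem_range, Nat.lt_succ_of_le hN, Nat.choose_one_right]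
  have hsum : ∑ k ∈ range (N+1), (N.choose k : ℝ) * aseq k = aseq N + N := by
    have := hstep1
    rw [Finset.sum_congr rfl fun k _ => by rw [hstep2 k]] at this
    simp only [mul_sub] at this
    rw [Finset.sum_sub_distrib, hdelta] at this
    linarith [this]
  rw [Finset.sum_range_succ] at hsum
  simp only [Nat.choose_self, Nat.cast_one, one_mul] at hsum
  linarith [hsum]

lemma aseq_eq_bernoulli' (k : ℕ) : aseq k = (bernoulli' k : ℝ) := by
  induction k using Nat.strong_induction_on with
  | _ k ih =>
    have hb : ∑ j ∈ range (k+1), ((k+1).choose j : ℝ) * (bernoulli' j : ℝ) = (k+1 : ℝ) := by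
      have := sum_bernoulli' (k+1)
      have := congrArg (fun q : ℚ => (q : ℝ)) this
      push_cast at this
      convert this using 2
    have ha := aseq_recurrence (k+1) (by omega)
    rw [Finset.sum_range_succ] at ha hb
    have hCC : ((k+1).choose k : ℝ) = (k+1 : ℝ) := by
      rw [Nat.choose_succ_self_right]; push_cast; ring
    rw [hCC] at ha hb
    have hih : ∑ j ∈ range k, ((k+1).choose j : ℝ) * aseq j
        = ∑ j ∈ range k, ((k+1).choose j : ℝ) * (bernoulli' j : ℝ) :=
      Finset.sum_congr rfl fun j hj => by rw [ih j (Finset.mem_range.1 hj)]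
    have hk0 : ((k:ℝ)+1) ≠ 0 := by positivity
    apply mul_left_cancel₀ hk0
    push_cast at ha hb ⊢
    linarith [ha, hb, hih]

lemma iteratedDeriv_gfun (d : ℕ) (hd : 1 ≤ d) :
    iteratedDeriv d gfun 0 = (bernoulli' d : ℝ) / d := by
  obtain ⟨j, rfl⟩ : ∃ j, d = j + 1 := ⟨d - 1, by omega⟩
  have h1 := aseq_succ j
  rw [aseq_eq_bernoulli' (j+1)] at h1
  have hj0 : ((j:ℝ)+1) ≠ 0 := by positivity
  rw [eq_div_iff (by push_cast; exact hj0)]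
  push_cast at h1 ⊢
  linarith [h1]

/-! ### cgf of the discrete uniform. -/

lemma cgf_eq (n : ℕ) (hn : 1 ≤ n) (t : ℝ) :
    cgf id ((n : ENNReal)⁻¹ • ∑ k ∈ Finset.range n, Measure.dirac (k : ℝ)) t =
      gfun (n * t) - gfun t := by
  have hint : ∀ k : ℕ, Integrable (fun x : ℝ => Real.exp (t * x)) (Measure.dirac (k:ℝ)) := by
    intro k
    refine (integrable_const (Real.exp (t * k))).congr ?_
    rw [Filter.EventuallyEq, MeasureTheory.ae_dirac_eq]
    simp
  have hmgf : mgf id ((n : ENNReal)⁻¹ • ∑ k ∈ Finset.range n, Measure.dirac (k : ℝ)) t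
      = (n : ℝ)⁻¹ * ∑ k ∈ Finset.range n, Real.exp (t * k) := by
    rw [mgf]
    simp only [id_eq]
    rw [integral_smul_measure, integral_finset_sum_measure (fun k _ => hint k)]
    congr 1
    · rw [ENNReal.toReal_inv]; simp
    · exact Finset.sum_congr rfl fun k _ => by rw [integral_dirac]
  have hn0 : (n : ℝ) ≠ 0 := Nat.cast_ne_zero.2 (by omega)
  have hS : (n : ℝ)⁻¹ * ∑ k ∈ Finset.range n, Real.exp (t * k)
      = mfun (n * t) / mfun t := by
    have h := geom_key n hn t
    rw [eq_div_iff (mfun_pos t).ne', inv_mul_eq_div, div_mul_eq_mul_div,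
      div_eq_iff hn0, h]
    ring
  rw [cgf, hmgf, hS, Real.log_div (mfun_pos _).ne' (mfun_pos _).ne']
  rfl

end Aux

/-- The `d`-th cumulant of a real random variable `X` under measure `μ`:
the `d`-th derivative at `0` of the cumulant generating function `log E[e^{tX}]`. -/
noncomputable def cumulant {Ω : Type*} [MeasurableSpace Ω] (X : Ω → ℝ) (μ : Measure Ω)
    (d : ℕ) : ℝ :=
  iteratedDeriv d (fun t => cgf X μ t) 0

/-- For the discrete uniform random variable `U_n` on `{0, 1, …, n-1}` and every `d ≥ 1`,
the `d`-th cumulant equals `(B_d/d)(n^d - 1)`, Bernoulli convention `B_1 = 1/2`. -/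
theorem cumulant_discrete_uniform (n : ℕ) (hn : 1 ≤ n) (d : ℕ) (hd : 1 ≤ d) :
    cumulant id ((n : ENNReal)⁻¹ • ∑ k ∈ Finset.range n, Measure.dirac (k : ℝ)) d =
      (bernoulli' d : ℝ) / d * ((n : ℝ) ^ d - 1) := by
  rw [cumulant]
  have hfun : (fun t => cgf id ((n : ENNReal)⁻¹ • ∑ k ∈ Finset.range n,
      Measure.dirac (k : ℝ)) t) = fun t => gfun ((n:ℝ) * t) - gfun t :=
    funext fun t => cgf_eq n hn t
  rw [hfun]
  have hg := gfun_contDiff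
  have hgd : ContDiff ℝ d gfun := hg.of_le (by exact_mod_cast le_top)
  have h1 : iteratedDeriv d (fun t => gfun ((n:ℝ) * t) - gfun t) 0
      = iteratedDeriv d (fun t => gfun ((n:ℝ) * t)) 0 - iteratedDeriv d gfun 0 := by
    have hcomp : ContDiff ℝ (⊤ : ℕ∞) (fun t : ℝ => gfun ((n:ℝ) * t)) :=
      hg.comp (contDiff_const.mul contDiff_id)
    exact iterD_sub (f := fun t : ℝ => gfun ((n:ℝ) * t)) (g := gfun) hcomp hg d 0
  have h2 : iteratedDeriv d (fun t : ℝ => gfun ((n:ℝ) * t)) 0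
      = (n:ℝ)^d * iteratedDeriv d gfun 0 := by
    have := iteratedDeriv_comp_const_mul hgd (n:ℝ)
    rw [this]
    norm_num
  rw [h1, h2, iteratedDeriv_gfun d hd]
  ring
end

section
/- The normalized d-th cumulant of baj − inv on S_n has absolute value Θ(n^{1−d/2}), uniformly in n, for each fixed d ∈ {1, 2, 4, 6, ...}: there exist constants c, C > 0 depending only on d with c·n^{1−d/2} ≤ |κ_d^n / (κ_2^n)^{d/2}| ≤ C·n^{1−d/2}. -/
open Finset

private lemma bernoulli_two_mul_ne (k : ℕ) (hk : k ≠ 0) : (bernoulli (2 * k) : ℝ) ≠ 0 := by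
  intro h
  have hq : (bernoulli (2 * k) : ℚ) = 0 := by exact_mod_cast h
  have hz : riemannZeta (2 * k) ≠ 0 := by
    apply riemannZeta_ne_zero_of_one_lt_re
    have h2 : (2 * (k:ℂ)).re = 2 * (k:ℝ) := by simp
    rw [h2]
    have : (1:ℝ) ≤ (k:ℝ) := by exact_mod_cast Nat.one_le_iff_ne_zero.mpr hk
    linarith
  apply hz
  rw [riemannZeta_two_mul_nat hk, hq]
  push_cast
  ring

private lemma bern_ne (d : ℕ) (hd : d = 1 ∨ Even d) (hd1 : 1 ≤ d) :
    (bernoulli' d : ℝ) ≠ 0 := by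
  rcases hd with rfl | he
  · rw [bernoulli'_one]; norm_num
  · rcases eq_or_ne d 1 with rfl | hne
    · norm_num at he
    obtain ⟨k, rfl⟩ := he
    have hk : k ≠ 0 := by omega
    have := bernoulli_two_mul_ne k hk
    rw [bernoulli_eq_bernoulli'_of_ne_one (by omega : 2 * k ≠ 1)] at this
    rwa [show k + k = 2 * k by ring]

private lemma term_nonneg {d n i : ℕ} (hn : 1 ≤ n) (hi : i ∈ Icc 1 (n-1)) :
    0 ≤ ((i:ℝ) * ((n:ℝ) - (i:ℝ))) ^ d - (i:ℝ) ^ d := by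
  simp only [mem_Icc] at hi
  have hx : (1:ℝ) ≤ (i:ℝ) := by exact_mod_cast hi.1
  have hy : (1:ℝ) ≤ (n:ℝ) - (i:ℝ) := by
    have : (i:ℝ) + 1 ≤ (n:ℝ) := by exact_mod_cast (by omega : i + 1 ≤ n)
    linarith
  have : (i:ℝ)^d ≤ ((i:ℝ) * ((n:ℝ) - (i:ℝ)))^d :=
    pow_le_pow_left₀ (by linarith) (le_mul_of_one_le_right (by linarith) hy) d
  linarith

private lemma sum_upper (d n : ℕ) (hn : 1 ≤ n) :
    ∑ i ∈ Icc 1 (n-1), (((i:ℝ) * ((n:ℝ) - (i:ℝ))) ^ d - (i:ℝ) ^ d) ≤ (n:ℝ)^(2*d+1) := by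
  have hb : ∀ i ∈ Icc 1 (n-1), (((i:ℝ) * ((n:ℝ) - (i:ℝ))) ^ d - (i:ℝ) ^ d) ≤ ((n:ℝ)^2)^d := by
    intro i hi
    simp only [mem_Icc] at hi
    have hx : (1:ℝ) ≤ (i:ℝ) := by exact_mod_cast hi.1
    have hy : (1:ℝ) ≤ (n:ℝ) - (i:ℝ) := by
      have : (i:ℝ) + 1 ≤ (n:ℝ) := by exact_mod_cast (by omega : i + 1 ≤ n)
      linarith
    have h1 : (i:ℝ) * ((n:ℝ) - (i:ℝ)) ≤ (n:ℝ)^2 := by nlinarith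
    have h2 : ((i:ℝ) * ((n:ℝ) - (i:ℝ)))^d ≤ ((n:ℝ)^2)^d :=
      pow_le_pow_left₀ (by nlinarith) h1 d
    have h3 : (0:ℝ) ≤ (i:ℝ)^d := by positivity
    linarith
  calc ∑ i ∈ Icc 1 (n-1), (((i:ℝ) * ((n:ℝ) - (i:ℝ))) ^ d - (i:ℝ) ^ d)
      ≤ ∑ i ∈ Icc 1 (n-1), ((n:ℝ)^2)^d := Finset.sum_le_sum hb
    _ = (Icc 1 (n-1)).card * ((n:ℝ)^2)^d := by rw [Finset.sum_const, nsmul_eq_mul]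
    _ ≤ (n:ℝ) * ((n:ℝ)^2)^d := by
        apply mul_le_mul_of_nonneg_right _ (by positivity)
        rw [Nat.card_Icc]
        exact_mod_cast (by omega : n - 1 + 1 - 1 ≤ n)
    _ = (n:ℝ)^(2*d+1) := by rw [← pow_mul]; ring

private lemma sum_lower (d n : ℕ) (hd1 : 1 ≤ d) (hn : 3 ≤ n) :
    (1/(18*27^d)) * (n:ℝ)^(2*d+1) ≤
      ∑ i ∈ Icc 1 (n-1), (((i:ℝ) * ((n:ℝ) - (i:ℝ))) ^ d - (i:ℝ) ^ d) := by
  set m := n / 3 with hm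
  have hm1 : 1 ≤ m := by omega
  have h2m : 2 * m ≤ n := by omega
  have hsub : Icc m (2*m-1) ⊆ Icc 1 (n-1) := by
    intro i hi; simp only [mem_Icc] at *; omega
  have hmlo : ((n:ℝ) - 2)/3 ≤ (m:ℝ) := by
    have h0 : n ≤ 3 * m + 2 := by omega
    have h3 : (n:ℝ) ≤ 3 * (m:ℝ) + 2 := by exact_mod_cast h0
    linarith
  have hm3 : (m:ℝ) ≤ (n:ℝ)/3 := by
    have h0 : 3 * m ≤ n := by omega
    have h3 : 3 * (m:ℝ) ≤ (n:ℝ) := by exact_mod_cast h0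
    linarith
  have hn3 : (3:ℝ) ≤ (n:ℝ) := by exact_mod_cast hn
  have hterm : ∀ i ∈ Icc m (2*m-1),
      (n:ℝ)^(2*d) / (2*27^d) ≤ ((i:ℝ) * ((n:ℝ) - (i:ℝ))) ^ d - (i:ℝ) ^ d := by
    intro i hi
    simp only [mem_Icc] at hi
    have hxm : (m:ℝ) ≤ (i:ℝ) := by exact_mod_cast hi.1
    have hx9 : (n:ℝ)/9 ≤ (i:ℝ) := by linarith
    have hile : (i:ℝ) ≤ 2*(m:ℝ) - 1 := by
      have h0 : i + 1 ≤ 2 * m := by omega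
      have h3 : (i:ℝ) + 1 ≤ 2*(m:ℝ) := by exact_mod_cast h0
      linarith
    have hy : (n:ℝ)/3 + 1 ≤ (n:ℝ) - (i:ℝ) := by linarith
    have hy2 : (2:ℝ) ≤ (n:ℝ) - (i:ℝ) := by linarith
    set x := (i:ℝ); set y := (n:ℝ) - (i:ℝ)
    have hx0 : (0:ℝ) < x := by linarith
    have hyd2 : (2:ℝ) ≤ y^d :=
      le_trans (le_self_pow₀ (by norm_num) (by omega)) (pow_le_pow_left₀ (by norm_num) hy2 d)
    have hxd : ((n:ℝ)/9)^d ≤ x^d := pow_le_pow_left₀ (by linarith) hx9 d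
    have hyd : ((n:ℝ)/3)^d ≤ y^d := pow_le_pow_left₀ (by linarith) (by linarith) d
    have key : x^d * (y^d/2) ≤ x^d * (y^d - 1) :=
      mul_le_mul_of_nonneg_left (by linarith) (by positivity)
    have e1 : (x*y)^d - x^d = x^d * (y^d - 1) := by rw [mul_pow]; ring
    have e2 : ((n:ℝ)/9)^d * (((n:ℝ)/3)^d/2) ≤ x^d * (y^d/2) :=
      mul_le_mul hxd (by linarith) (by positivity) (by positivity)
    have e3 : ((n:ℝ)/9)^d * (((n:ℝ)/3)^d/2) = (n:ℝ)^(2*d)/(2*27^d) := by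
      have h93 : (27:ℝ)^d = 9^d * 3^d := by rw [← mul_pow]; norm_num
      have h2d : (n:ℝ)^(2*d) = (n:ℝ)^d * (n:ℝ)^d := by rw [two_mul, pow_add]
      rw [h2d, h93, div_pow, div_pow]
      field_simp
    rw [e1, ← e3]
    linarith
  have hcard : (Icc m (2*m-1)).card = m := by rw [Nat.card_Icc]; omega
  have step1 : (m:ℝ) * ((n:ℝ)^(2*d) / (2*27^d)) ≤
      ∑ i ∈ Icc m (2*m-1), (((i:ℝ) * ((n:ℝ) - (i:ℝ))) ^ d - (i:ℝ) ^ d) := by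
    have := Finset.card_nsmul_le_sum (Icc m (2*m-1))
      (fun i => (((i:ℝ) * ((n:ℝ) - (i:ℝ))) ^ d - (i:ℝ) ^ d)) ((n:ℝ)^(2*d) / (2*27^d)) hterm
    rwa [hcard, nsmul_eq_mul] at this
  have step2 : ∑ i ∈ Icc m (2*m-1), (((i:ℝ) * ((n:ℝ) - (i:ℝ))) ^ d - (i:ℝ) ^ d) ≤
      ∑ i ∈ Icc 1 (n-1), (((i:ℝ) * ((n:ℝ) - (i:ℝ))) ^ d - (i:ℝ) ^ d) :=
    Finset.sum_le_sum_of_subset_of_nonneg hsub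
      (fun i hi _ => term_nonneg (by omega) hi)
  have hm9 : (n:ℝ)/9 ≤ (m:ℝ) := by linarith
  have step0 : (1/(18*27^d)) * (n:ℝ)^(2*d+1) ≤ (m:ℝ) * ((n:ℝ)^(2*d) / (2*27^d)) := by
    have hpow : (n:ℝ)^(2*d+1) = (n:ℝ) * (n:ℝ)^(2*d) := by rw [pow_succ]; ring
    rw [hpow]
    have h1 : (0:ℝ) ≤ (n:ℝ)^(2*d) / (2*27^d) := by positivity
    calc (1/(18*27^d)) * ((n:ℝ) * (n:ℝ)^(2*d)) = ((n:ℝ)/9) * ((n:ℝ)^(2*d) / (2*27^d)) := by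
          field_simp; ring
      _ ≤ (m:ℝ) * ((n:ℝ)^(2*d) / (2*27^d)) := mul_le_mul_of_nonneg_right hm9 h1
  linarith

/-- The `d`-th cumulant of `baj - inv` on `S_n`:
`κ_d^n = (B_d/d) ∑_{i=1}^{n-1} ((i(n-i))^d - i^d)`, Bernoulli convention `B_1 = 1/2`. -/
noncomputable def bajInvCumulant (d n : ℕ) : ℝ :=
  ((bernoulli' d : ℝ) / d) *
    ∑ i ∈ Finset.Icc 1 (n - 1), (((i : ℝ) * ((n : ℝ) - (i : ℝ))) ^ d - (i : ℝ) ^ d)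

/-- For each fixed `d ∈ {1, 2, 4, 6, …}`, the normalized `d`-th cumulant of `baj - inv`
on `S_n` has absolute value `Θ(n^{1-d/2})`, uniformly in `n`: there are constants
`c, C > 0` depending only on `d` with
`c n^{1-d/2} ≤ |κ_d^n / (κ_2^n)^{d/2}| ≤ C n^{1-d/2}`. -/
theorem bajInv_normalized_cumulant_theta (d : ℕ) (hd : d = 1 ∨ Even d) (hd1 : 1 ≤ d) :
    ∃ c C : ℝ, 0 < c ∧ 0 < C ∧ ∀ n : ℕ, 3 ≤ n →
      c * (n : ℝ) ^ ((1 : ℝ) - (d : ℝ) / 2) ≤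
        |bajInvCumulant d n / (bajInvCumulant 2 n) ^ ((d : ℝ) / 2)| ∧
      |bajInvCumulant d n / (bajInvCumulant 2 n) ^ ((d : ℝ) / 2)| ≤
        C * (n : ℝ) ^ ((1 : ℝ) - (d : ℝ) / 2) := by
  have hbne := bern_ne d hd hd1
  set β : ℝ := |(bernoulli' d : ℝ)| / d with hβdef
  have hdpos : (0:ℝ) < d := by exact_mod_cast hd1
  have hβ : 0 < β := div_pos (abs_pos.mpr hbne) hdpos
  set A : ℝ := 1/(18*27^d) with hA
  set A2 : ℝ := 1/(18*27^2) with hA2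
  have hApos : 0 < A := by positivity
  have hA2pos : 0 < A2 := by positivity
  set u : ℝ := (1/12:ℝ) ^ ((d:ℝ)/2) with hu
  set v : ℝ := (A2/12) ^ ((d:ℝ)/2) with hv
  have hupos : 0 < u := Real.rpow_pos_of_pos (by norm_num) _
  have hvpos : 0 < v := Real.rpow_pos_of_pos (by positivity) _
  refine ⟨β * A / u, β / v, by positivity, by positivity, fun n hn => ?_⟩
  clear_value β
  set N : ℝ := (n:ℝ) with hN
  have hN3 : (3:ℝ) ≤ N := by rw [hN]; exact_mod_cast hn
  have hN0 : 0 < N := by linarith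
  set Sd : ℝ := ∑ i ∈ Icc 1 (n-1), (((i:ℝ) * ((N) - (i:ℝ))) ^ d - (i:ℝ) ^ d) with hSd
  set S2 : ℝ := ∑ i ∈ Icc 1 (n-1), (((i:ℝ) * ((N) - (i:ℝ))) ^ 2 - (i:ℝ) ^ 2) with hS2
  have hSdlo : A * N^(2*d+1) ≤ Sd := sum_lower d n hd1 hn
  have hSdhi : Sd ≤ N^(2*d+1) := sum_upper d n (by omega)
  have hS2lo : A2 * N^(2*2+1) ≤ S2 := sum_lower 2 n (by norm_num) hn
  have hS2hi : S2 ≤ N^(2*2+1) := sum_upper 2 n (by omega)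
  have hκd : bajInvCumulant d n = ((bernoulli' d : ℝ) / d) * Sd := rfl
  have hκ2eq : bajInvCumulant 2 n = S2 / 12 := by
    rw [bajInvCumulant, ← hS2]
    have hb2 : ((bernoulli' 2 : ℚ) : ℝ) = 1/6 := by rw [bernoulli'_two]; norm_num
    rw [hb2]
    push_cast
    ring
  clear_value Sd S2
  have hSd0 : 0 ≤ Sd := le_trans (by positivity) hSdlo
  have hκ2lo : A2/12 * N^(2*2+1) ≤ S2 / 12 := by
    calc A2/12 * N^(2*2+1) = (A2 * N^(2*2+1))/12 := by ring
      _ ≤ S2/12 := by gcongr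
  have hκ2hi : S2 / 12 ≤ (1/12) * N^(2*2+1) := by
    calc S2/12 ≤ N^(2*2+1)/12 := by gcongr
      _ = (1/12) * N^(2*2+1) := by ring
  have hκ2pos : 0 < S2 / 12 := lt_of_lt_of_le (by positivity) hκ2lo
  set D : ℝ := (S2 / 12) ^ ((d:ℝ)/2) with hD
  have hDpos : 0 < D := Real.rpow_pos_of_pos hκ2pos _
  set P : ℝ := (N^(2*2+1)) ^ ((d:ℝ)/2) with hP
  have hPpos : 0 < P := Real.rpow_pos_of_pos (by positivity) _
  have hDlo : v * P ≤ D := by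
    rw [hv, hP, ← Real.mul_rpow (by positivity) (by positivity)]
    exact Real.rpow_le_rpow (by positivity) hκ2lo (by positivity)
  have hDhi : D ≤ u * P := by
    rw [hu, hP, ← Real.mul_rpow (by norm_num) (by positivity)]
    exact Real.rpow_le_rpow (le_of_lt hκ2pos) (by linarith) (by positivity)
  set E : ℝ := N ^ ((1:ℝ) - (d:ℝ)/2) with hE
  have hEpos : 0 < E := Real.rpow_pos_of_pos hN0 _
  have hkey : N^(2*d+1) = E * P := by
    rw [hE, hP, ← Real.rpow_natCast N (2*d+1), ← Real.rpow_natCast N (2*2+1),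
      ← Real.rpow_mul hN0.le, ← Real.rpow_add hN0]
    congr 1
    push_cast
    ring
  have habs : |((bernoulli' d : ℝ) / d) * Sd| = β * Sd := by
    rw [abs_mul, abs_div, Nat.abs_cast, abs_of_nonneg hSd0, hβdef]
  have hnumlo : β * A * (E * P) ≤ β * Sd := by
    rw [← hkey]
    calc β * A * N^(2*d+1) = β * (A * N^(2*d+1)) := by ring
      _ ≤ β * Sd := mul_le_mul_of_nonneg_left hSdlo hβ.le
  have hnumhi : β * Sd ≤ β * (E * P) := by
    rw [← hkey]
    exact mul_le_mul_of_nonneg_left hSdhi hβ.le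
  rw [hκd, hκ2eq, abs_div, abs_of_pos hDpos, habs]
  constructor
  · rw [le_div_iff₀ hDpos]
    calc β * A / u * E * D ≤ β * A / u * E * (u * P) :=
          mul_le_mul_of_nonneg_left hDhi (by positivity)
      _ = β * A * (E * P) := by field_simp
      _ ≤ β * Sd := hnumlo
  · rw [div_le_iff₀ hDpos]
    calc β * Sd ≤ β * (E * P) := hnumhi
      _ = β / v * E * (v * P) := by field_simp
      _ ≤ β / v * E * D := mul_le_mul_of_nonneg_left hDlo (by positivity)
end
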